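/- arXiv:1007.1600 — 2 statements merged into one kernel-verified Lean document; each statement's English description precedes it below -/
import Mathlib

section
/- Suppose a semigroup of positivity-preserving linear operators $P_t$ on bounded measurable functions satisfies the pointwise Harnack bound $p(x,y,s)\le p(x,z,t)(t/s)^{D/2}\exp(\frac{D}{m}\frac{d(y,z)^2}{4(t-s)})$ for the heat kernel $p$ and all $0<s<t$, and $P_t 1\le 1$. Then for every $x$ and $t>0$: $p(x,x,t)\,\mu(B(x,\sqrt{t}))\le 2^{D/2}e^{D/(4m)}$, i.e. the on-diagonal upper bound $p(x,x,t)\le C(D,m)/\mu(B(x,\sqrt{t}))$ holds with $C(D,m)=2^{D/2}e^{D/(4m)}$. -/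
open MeasureTheory

/-- Inequality (2.7): the on-diagonal upper bound for the heat kernel from the
Harnack inequality and sub-Markovianity. -/
theorem on_diagonal_upper_bound
    {M : Type*} [PseudoMetricSpace M] [MeasurableSpace M]
    (μ : Measure M) (p : M → M → ℝ → ℝ) (D m : ℝ)
    (hD : 0 < D) (hm : 0 < m)
    (hpos : ∀ x y : M, ∀ t : ℝ, 0 < t → 0 < p x y t)
    (hsymm : ∀ x y : M, ∀ t : ℝ, 0 < t → p x y t = p y x t)
    (hInt : ∀ x : M, ∀ t : ℝ, 0 < t → Integrable (fun y => p x y t) μ)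
    (hHarnack : ∀ x y z : M, ∀ s t : ℝ, 0 < s → s < t →
        p x y s ≤ p x z t * (t / s) ^ (D / 2)
            * Real.exp (D / m * dist y z ^ 2 / (4 * (t - s))))
    (hMarkov : ∀ x : M, ∀ t : ℝ, 0 < t → (∫ y, p x y t ∂μ) ≤ 1) :
    ∀ x : M, ∀ t : ℝ, 0 < t →
      p x x t * (μ (Metric.ball x (Real.sqrt t))).toReal
        ≤ 2 ^ (D / 2) * Real.exp (D / (4 * m)) := by
  intro x t ht
  set C : ℝ := 2 ^ (D / 2) * Real.exp (D / (4 * m)) with hC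
  have hCpos : 0 < C := by positivity
  set B := Metric.ball x (Real.sqrt t) with hB
  have h2t : 0 < 2 * t := by linarith
  have hpInt : Integrable (fun y => C * p x y (2 * t)) μ := (hInt x (2 * t) h2t).const_mul C
  -- key pointwise bound on the ball
  have key : ∀ y ∈ B, p x x t ≤ C * p x y (2 * t) := by
    intro y hy
    have hdist : dist x y ^ 2 < t := by
      have : dist x y < Real.sqrt t := by
        rw [dist_comm]; exact Metric.mem_ball.mp hy
      exact (Real.lt_sqrt dist_nonneg).mp this
    have hH := hHarnack x x y t (2 * t) ht (by linarith)
    have hsimp : (2 * t) / t = 2 := by field_simp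
    have hts : 2 * t - t = t := by ring
    rw [hsimp, hts] at hH
    have hexp : Real.exp (D / m * dist x y ^ 2 / (4 * t)) ≤ Real.exp (D / (4 * m)) := by
      apply Real.exp_le_exp.mpr
      rw [div_le_div_iff₀ (by positivity) (by positivity)]
      have h1 : D / m * dist x y ^ 2 ≤ D / m * t :=
        mul_le_mul_of_nonneg_left hdist.le (by positivity)
      calc D / m * dist x y ^ 2 * (4 * m) ≤ D / m * t * (4 * m) :=
            mul_le_mul_of_nonneg_right h1 (by positivity)
        _ = D * (4 * t) := by field_simp
    calc p x x t ≤ p x y (2 * t) * 2 ^ (D / 2)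
          * Real.exp (D / m * dist x y ^ 2 / (4 * t)) := hH
      _ ≤ p x y (2 * t) * 2 ^ (D / 2) * Real.exp (D / (4 * m)) := by
          apply mul_le_mul_of_nonneg_left hexp
          have := (hpos x y (2 * t) h2t).le
          positivity
      _ = C * p x y (2 * t) := by rw [hC]; ring
  -- the auxiliary function g = min (p x x t) (C * p x y (2t))
  set g : M → ℝ := fun y => min (p x x t) (C * p x y (2 * t)) with hg
  have hg_nonneg : ∀ y, 0 ≤ g y := fun y =>
    le_min (hpos x x t ht).le (by have := (hpos x y (2 * t) h2t).le; positivity)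
  have hg_le : ∀ y, g y ≤ C * p x y (2 * t) := fun y => min_le_right _ _
  have hgInt : Integrable g μ := by
    refine hpInt.mono (aestronglyMeasurable_const.inf hpInt.aestronglyMeasurable) ?_
    refine Filter.Eventually.of_forall fun y => ?_
    rw [Real.norm_eq_abs, Real.norm_eq_abs, abs_of_nonneg (hg_nonneg y),
      abs_of_nonneg (by have := (hpos x y (2 * t) h2t).le; positivity)]
    exact hg_le y
  -- the ball is contained in the superlevel set of g
  have hsub : B ⊆ {y | p x x t ≤ g y} := fun y hy => le_min le_rfl (key y hy)
  have hSfin : μ {y | p x x t ≤ g y} < ⊤ := hgInt.measure_ge_lt_top (hpos x x t ht)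
  have h1 : p x x t * (μ B).toReal ≤ p x x t * (μ {y | p x x t ≤ g y}).toReal := by
    apply mul_le_mul_of_nonneg_left _ (hpos x x t ht).le
    exact ENNReal.toReal_mono hSfin.ne (measure_mono hsub)
  have h2 := mul_meas_ge_le_integral_of_nonneg
    (Filter.Eventually.of_forall hg_nonneg) hgInt (p x x t)
  calc p x x t * (μ B).toReal
      ≤ p x x t * (μ {y | p x x t ≤ g y}).toReal := h1
    _ ≤ ∫ y, g y ∂μ := h2
    _ ≤ ∫ y, C * p x y (2 * t) ∂μ := integral_mono hgInt hpInt hg_le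
    _ = C * ∫ y, p x y (2 * t) ∂μ := integral_const_mul C _
    _ ≤ C * 1 := mul_le_mul_of_nonneg_left (hMarkov x (2 * t) h2t) hCpos.le
    _ = C := mul_one C
end

section
/- Under the hypotheses of the previous statement (Harnack inequality for the heat kernel with constants $D, m$, and $P_t 1 \le 1$), for every $x\in\mathbb{M}$, $R_0>0$ and $R\ge R_0$ one has $\mu(B(x,R)) \le \frac{C(D,m)}{R_0^D\, p(x,x,R_0^2)} R^D$, where $C(D,m)=2^{D/2}e^{D/(4m)}$. -/
open MeasureTheory

/-- Proposition 2.3: polynomial volume growth of balls. -/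
theorem volume_growth
    {M : Type*} [PseudoMetricSpace M] [MeasurableSpace M]
    (μ : Measure M) (p : M → M → ℝ → ℝ) (D m : ℝ)
    (hD : 0 < D) (hm : 0 < m)
    (hpos : ∀ x y : M, ∀ t : ℝ, 0 < t → 0 < p x y t)
    (hsymm : ∀ x y : M, ∀ t : ℝ, 0 < t → p x y t = p y x t)
    (hInt : ∀ x : M, ∀ t : ℝ, 0 < t → Integrable (fun y => p x y t) μ)
    (hHarnack : ∀ x y z : M, ∀ s t : ℝ, 0 < s → s < t →
        p x y s ≤ p x z t * (t / s) ^ (D / 2)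
            * Real.exp (D / m * dist y z ^ 2 / (4 * (t - s))))
    (hMarkov : ∀ x : M, ∀ t : ℝ, 0 < t → (∫ y, p x y t ∂μ) ≤ 1) :
    ∀ x : M, ∀ R₀ R : ℝ, 0 < R₀ → R₀ ≤ R →
      (μ (Metric.ball x R)).toReal
        ≤ (2 ^ (D / 2) * Real.exp (D / (4 * m)))
            / (R₀ ^ D * p x x (R₀ ^ 2)) * R ^ D := by
  intro x R₀ R hR₀ hR₀R
  have hRpos : 0 < R := lt_of_lt_of_le hR₀ hR₀R
  set C : ℝ := 2 ^ (D / 2) * Real.exp (D / (4 * m)) with hC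
  have hCpos : 0 < C :=
    mul_pos (Real.rpow_pos_of_pos (by norm_num) _) (Real.exp_pos _)
  have hpR₀ : 0 < p x x (R₀ ^ 2) := hpos x x _ (by positivity)
  have hpR : 0 < p x x (R ^ 2) := hpos x x _ (by positivity)
  have hRD : (0:ℝ) < (R / R₀) ^ D := Real.rpow_pos_of_pos (by positivity) _
  -- Step 1 : on-diagonal upper bound via Markov's inequality
  have step1 : (μ (Metric.ball x R)).toReal * p x x (R ^ 2) ≤ C := by
    have hptw : ∀ y ∈ Metric.ball x R, p x x (R ^ 2) ≤ C * p x y (2 * R ^ 2) := by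
      intro y hy
      have hd : dist x y < R := by rw [dist_comm]; exact hy
      have hpy : (0:ℝ) ≤ p x y (2 * R ^ 2) := (hpos x y _ (by positivity)).le
      have h := hHarnack x x y (R ^ 2) (2 * R ^ 2) (by positivity) (by nlinarith)
      have h2 : (2 * R ^ 2) / (R ^ 2) = 2 := by field_simp
      rw [h2] at h
      have harg : D / m * dist x y ^ 2 / (4 * (2 * R ^ 2 - R ^ 2)) ≤ D / (4 * m) := by
        have h1 : 2 * R ^ 2 - R ^ 2 = R ^ 2 := by ring
        rw [h1]
        have heq : D / m * dist x y ^ 2 / (4 * R ^ 2)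
            = D / (4 * m) * (dist x y ^ 2 / R ^ 2) := by
          rw [div_mul_eq_mul_div, div_div, div_mul_div_comm]
          ring_nf
        rw [heq]
        have hle : dist x y ^ 2 / R ^ 2 ≤ 1 := by
          rw [div_le_one (by positivity)]
          nlinarith [dist_nonneg (x := x) (y := y)]
        calc D / (4 * m) * (dist x y ^ 2 / R ^ 2) ≤ D / (4 * m) * 1 :=
              mul_le_mul_of_nonneg_left hle (by positivity)
          _ = D / (4 * m) := by ring
      calc p x x (R ^ 2)
          ≤ p x y (2 * R ^ 2) * 2 ^ (D / 2)
              * Real.exp (D / m * dist x y ^ 2 / (4 * (2 * R ^ 2 - R ^ 2))) := h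
        _ ≤ p x y (2 * R ^ 2) * 2 ^ (D / 2) * Real.exp (D / (4 * m)) := by
            apply mul_le_mul_of_nonneg_left (Real.exp_le_exp.2 harg)
            positivity
        _ = C * p x y (2 * R ^ 2) := by rw [hC]; ring
    set ε : ℝ := p x x (R ^ 2) / C with hε
    have hεpos : 0 < ε := div_pos hpR hCpos
    have hint2 : Integrable (fun y => p x y (2 * R ^ 2)) μ := hInt x _ (by positivity)
    have hsub : Metric.ball x R ⊆ {y | ε ≤ p x y (2 * R ^ 2)} := by
      intro y hy
      have h := hptw y hy
      exact (div_le_iff₀ hCpos).2 (by rw [mul_comm]; exact h)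
    have hlt := hint2.measure_ge_lt_top hεpos
    have hmono : (μ (Metric.ball x R)).toReal
        ≤ (μ {y | ε ≤ p x y (2 * R ^ 2)}).toReal :=
      ENNReal.toReal_mono hlt.ne (measure_mono hsub)
    have hmarkov := mul_meas_ge_le_integral_of_nonneg
      (ae_of_all μ fun y => (hpos x y _ (by positivity)).le) hint2 ε
    have h5 := hMarkov x (2 * R ^ 2) (by positivity)
    have hkey : ε * (μ (Metric.ball x R)).toReal ≤ 1 :=
      le_trans (mul_le_mul_of_nonneg_left hmono hεpos.le) (hmarkov.trans h5)
    rw [hε, div_mul_eq_mul_div, div_le_one hCpos] at hkey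
    rw [mul_comm]
    exact hkey
  -- Step 2 : time comparison
  have step2 : p x x (R₀ ^ 2) ≤ p x x (R ^ 2) * (R / R₀) ^ D := by
    rcases eq_or_lt_of_le hR₀R with heq | hlt
    · rw [heq, div_self (by positivity : R ≠ 0), Real.one_rpow, mul_one]
    · have h := hHarnack x x x (R₀ ^ 2) (R ^ 2) (by positivity) (by nlinarith)
      simp only [dist_self, ne_eq, OfNat.ofNat_ne_zero, not_false_eq_true, zero_pow,
        mul_zero, zero_div, Real.exp_zero, mul_one] at h
      have hre : ((R ^ 2 : ℝ) / R₀ ^ 2) ^ (D / 2) = (R / R₀) ^ D := by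
        rw [← div_pow, ← Real.rpow_natCast (R / R₀) 2,
          ← Real.rpow_mul (by positivity)]
        congr 1
        push_cast
        ring
      calc p x x (R₀ ^ 2) ≤ p x x (R ^ 2) * ((R ^ 2) / R₀ ^ 2) ^ (D / 2) := h
        _ = p x x (R ^ 2) * (R / R₀) ^ D := by rw [hre]
  -- combine
  have key : (μ (Metric.ball x R)).toReal * p x x (R₀ ^ 2) ≤ C * (R / R₀) ^ D := by
    calc (μ (Metric.ball x R)).toReal * p x x (R₀ ^ 2)
        ≤ (μ (Metric.ball x R)).toReal * (p x x (R ^ 2) * (R / R₀) ^ D) :=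
          mul_le_mul_of_nonneg_left step2 ENNReal.toReal_nonneg
      _ = ((μ (Metric.ball x R)).toReal * p x x (R ^ 2)) * (R / R₀) ^ D := by ring
      _ ≤ C * (R / R₀) ^ D := mul_le_mul_of_nonneg_right step1 hRD.le
  have hfinal : (μ (Metric.ball x R)).toReal ≤ C * (R / R₀) ^ D / p x x (R₀ ^ 2) :=
    (le_div_iff₀ hpR₀).2 key
  have heq2 : C * (R / R₀) ^ D / p x x (R₀ ^ 2)
      = C / (R₀ ^ D * p x x (R₀ ^ 2)) * R ^ D := by
    rw [Real.div_rpow hRpos.le hR₀.le]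
    have h1 : (R₀:ℝ) ^ D ≠ 0 := (Real.rpow_pos_of_pos hR₀ _).ne'
    field_simp
  rw [hC] at heq2 hfinal
  rw [← heq2]
  exact hfinal
end
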